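/- Let (X, I) be a p-extendible independence system (p a positive integer) and f : 2^X → ℝ≥0 a monotone submodular function, and suppose the instance is (p+1)-stable with unique optimal solution S* = argmax_{S ∈ I} f(S). Then every greedy run outputs S*; that is, if e₁, …, e_k is a sequence with Sᵢ = {e₁,…,eᵢ} ∈ I for all i, each eᵢ maximizes the marginal value f(S_{i−1} ∪ {e}) − f(S_{i−1}) among elements e ∉ S_{i−1} with S_{i−1} ∪ {e} ∈ I, and S_k is a maximal independent set, then S_k = S*. -/

import Mathlib

open Finset

/-- A downward-closed independence system on the finite type `α`. -/
def DownClosed {α : Type*} (I : Finset α → Prop) : Prop :=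
  I ∅ ∧ ∀ A B : Finset α, I A → B ⊆ A → I B
/-- `(X, I)` is `p`-extendible: whenever `A ⊆ B`, `A, B ∈ I` and `A ∪ {e} ∈ I`,
there is `Z ⊆ B \ A` with `|Z| ≤ p` and `(B \ Z) ∪ {e} ∈ I`. -/
def Extendible {α : Type*} [DecidableEq α] (p : ℕ) (I : Finset α → Prop) : Prop :=
  ∀ A B : Finset α, ∀ e : α, A ⊆ B → I A → I B → I (insert e A) →
    ∃ Z ⊆ B \ A, Z.card ≤ p ∧ I (insert e (B \ Z))
/-- Monotonicity of a set function. -/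
def MonotoneFn {α : Type*} (f : Finset α → ℝ) : Prop :=
  ∀ A B : Finset α, A ⊆ B → f A ≤ f B

/-- Submodularity of a set function. -/
def SubmodularFn {α : Type*} [DecidableEq α] (f : Finset α → ℝ) : Prop :=
  ∀ A B : Finset α, f (A ∪ B) + f (A ∩ B) ≤ f A + f B

/-- `f'` is a `γ`-perturbation of the monotone submodular function `f`. -/
def IsPerturbation {α : Type*} [DecidableEq α] (γ : ℝ) (f f' : Finset α → ℝ) : Prop :=
  (∀ S : Finset α, 0 ≤ f' S) ∧ MonotoneFn f' ∧ SubmodularFn f' ∧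
  (∀ S : Finset α, f S ≤ f' S ∧ f' S ≤ γ * f S) ∧
  ∀ S : Finset α, ∀ j ∉ S,
    f (insert j S) - f S ≤ f' (insert j S) - f' S ∧
    (f' (insert j S) - f' S) - (f (insert j S) - f S) ≤ (γ - 1) * f {j}
/-- The submodular instance `(I, f)` is `γ`-stable with (unique) optimal solution `S`:
for every `γ`-perturbation `f'` of `f`, `S` is the unique maximizer of `f'` over `I`. -/
def SubmodStable {α : Type*} [DecidableEq α] (I : Finset α → Prop)
    (f : Finset α → ℝ) (γ : ℝ) (S : Finset α) : Prop :=
  I S ∧ ∀ f' : Finset α → ℝ, IsPerturbation γ f f' →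
    ∀ T : Finset α, I T → T ≠ S → f' T < f' S
/-- A greedy run for a set function `f`: every prefix is independent, each `eᵢ`
maximizes the marginal value among feasible additions, and the final set is maximal. -/
def GreedyRunSub {α : Type*} [DecidableEq α] (I : Finset α → Prop)
    (f : Finset α → ℝ) (l : List α) : Prop :=
  (∀ i : Fin l.length,
    l.get i ∉ (l.take i.val).toFinset ∧
    I (insert (l.get i) (l.take i.val).toFinset) ∧
    ∀ e : α, e ∉ (l.take i.val).toFinset → I (insert e (l.take i.val).toFinset) →
      f (insert e (l.take i.val).toFinset) - f (l.take i.val).toFinset ≤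
        f (insert (l.get i) (l.take i.val).toFinset) - f (l.take i.val).toFinset) ∧
  ∀ e : α, e ∉ l.toFinset → ¬ I (insert e l.toFinset)


lemma submod_marg_mono {α : Type*} [DecidableEq α] {f : Finset α → ℝ} (hsub : SubmodularFn f)
    {A B : Finset α} (hAB : A ⊆ B) {z : α} (hz : z ∉ B) :
    f (insert z B) - f B ≤ f (insert z A) - f A := by
  have h := hsub (insert z A) B
  rw [Finset.insert_union, Finset.union_eq_right.mpr hAB,
    Finset.insert_inter_of_notMem hz, Finset.inter_eq_left.mpr hAB] at h
  linarith

lemma submod_union_le {α : Type*} [DecidableEq α] {f : Finset α → ℝ} (hsub : SubmodularFn f)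
    (hmono : MonotoneFn f) (A B : Finset α) :
    f (A ∪ B) ≤ f A + ∑ z ∈ B, (f (insert z A) - f A) := by
  induction B using Finset.induction with
  | empty => simp
  | @insert z B' hz ih =>
    rw [Finset.sum_insert hz]
    have h1 : f (A ∪ insert z B') ≤ f (A ∪ B') + (f (insert z A) - f A) := by
      have h := hsub (A ∪ B') (insert z A)
      have h2 : A ⊆ (A ∪ B') ∩ insert z A :=
        Finset.subset_inter Finset.subset_union_left (Finset.subset_insert _ _)
      have h3 := hmono _ _ h2
      have h4 : (A ∪ B') ∪ insert z A = A ∪ insert z B' := by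
        ext y; simp; tauto
      rw [h4] at h
      linarith
    linarith

/-- greedy marginal term -/
noncomputable def gterm {α : Type*} [DecidableEq α] (f : Finset α → ℝ) (l : List α)
    (S : Finset α) (i : ℕ) : ℝ :=
  if h : i < l.length then
    (if l.get ⟨i, h⟩ ∈ S then f ((l.take (i+1)).toFinset) - f ((l.take i).toFinset) else 0)
  else 0

noncomputable def gfun {α : Type*} [DecidableEq α] (f : Finset α → ℝ) (l : List α)
    (S : Finset α) : ℝ :=
  ∑ i ∈ Finset.range l.length, gterm f l S i

lemma take_toFinset_mono {α : Type*} [DecidableEq α] (l : List α) {a b : ℕ} (h : a ≤ b) :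
    (l.take a).toFinset ⊆ (l.take b).toFinset := by
  intro x hx
  rw [List.mem_toFinset] at hx ⊢
  have h2 : List.take a (List.take b l) = List.take (min a b) l := List.take_take
  rw [Nat.min_eq_left h] at h2
  rw [← h2] at hx
  exact List.take_subset _ _ hx

lemma take_toFinset_subset {α : Type*} [DecidableEq α] (l : List α) (a : ℕ) :
    (l.take a).toFinset ⊆ l.toFinset := by
  intro x hx
  rw [List.mem_toFinset] at hx ⊢
  exact List.take_subset _ _ hx

lemma gterm_nonneg {α : Type*} [DecidableEq α] {f : Finset α → ℝ} (hmono : MonotoneFn f)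
    (l : List α) (S : Finset α) (i : ℕ) : 0 ≤ gterm f l S i := by
  unfold gterm
  split_ifs with h1 h2
  · have := hmono _ _ (take_toFinset_mono l (Nat.le_succ i))
    linarith
  · exact le_rfl
  · exact le_rfl

lemma take_succ_toFinset {α : Type*} [DecidableEq α] (l : List α) (i : ℕ) (h : i < l.length) :
    (l.take (i+1)).toFinset = insert (l.get ⟨i, h⟩) (l.take i).toFinset := by
  rw [List.take_succ, List.getElem?_eq_getElem h]
  rw [Option.toList_some, List.toFinset_append, List.toFinset_cons, List.toFinset_nil]
  rw [Finset.insert_eq, Finset.union_comm]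
  rfl

lemma gterm_mod {α : Type*} [DecidableEq α] (f : Finset α → ℝ) (l : List α)
    (A B : Finset α) (i : ℕ) :
    gterm f l (A ∪ B) i + gterm f l (A ∩ B) i = gterm f l A i + gterm f l B i := by
  unfold gterm
  by_cases h : i < l.length
  · rw [dif_pos h, dif_pos h, dif_pos h, dif_pos h]
    by_cases hA : l.get ⟨i, h⟩ ∈ A <;> by_cases hB : l.get ⟨i, h⟩ ∈ B <;>
      simp only [List.get_eq_getElem] at hA hB <;>
      simp [Finset.mem_union, Finset.mem_inter, hA, hB]
  · rw [dif_neg h, dif_neg h, dif_neg h, dif_neg h]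

lemma gterm_mono {α : Type*} [DecidableEq α] {f : Finset α → ℝ} (hmono : MonotoneFn f)
    (l : List α) {A B : Finset α} (hAB : A ⊆ B) (i : ℕ) :
    gterm f l A i ≤ gterm f l B i := by
  unfold gterm
  split_ifs with h h1 h2
  · exact le_rfl
  · exact absurd (hAB h1) h2
  · have := hmono _ _ (take_toFinset_mono l (Nat.le_succ i))
    linarith
  · exact le_rfl
  · exact le_rfl

lemma gterm_le_tele {α : Type*} [DecidableEq α] {f : Finset α → ℝ} (hsub : SubmodularFn f)
    (l : List α) (S : Finset α) (i : ℕ) (h : i < l.length)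
    (hnm : l.get ⟨i, h⟩ ∉ (l.take i).toFinset) :
    gterm f l S i ≤ f ((l.take (i+1)).toFinset ∩ S) - f ((l.take i).toFinset ∩ S) := by
  unfold gterm
  rw [dif_pos h]
  set x := l.get ⟨i, h⟩
  by_cases hS : x ∈ S
  · rw [if_pos hS, take_succ_toFinset l i h]
    have hins : insert x (l.take i).toFinset ∩ S = insert x ((l.take i).toFinset ∩ S) :=
      Finset.insert_inter_of_mem hS
    rw [hins]
    have hkey := hsub (insert x ((l.take i).toFinset ∩ S)) (l.take i).toFinset
    have h1 : insert x ((l.take i).toFinset ∩ S) ∪ (l.take i).toFinset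
        = insert x (l.take i).toFinset := by
      rw [Finset.insert_union, Finset.union_eq_right.mpr Finset.inter_subset_left]
    have h2 : insert x ((l.take i).toFinset ∩ S) ∩ (l.take i).toFinset
        = (l.take i).toFinset ∩ S := by
      rw [Finset.insert_inter_of_notMem hnm,
        Finset.inter_eq_left.mpr Finset.inter_subset_left]
    rw [h1, h2] at hkey
    linarith
  · rw [if_neg hS, take_succ_toFinset l i h, Finset.insert_inter_of_notMem hS]
    linarith

lemma gterm_insert {α : Type*} [DecidableEq α] {f : Finset α → ℝ} (hmono : MonotoneFn f)
    (l : List α) {S : Finset α} {j : α} (hj : j ∉ S) (i : ℕ) :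
    gterm f l (insert j S) i ≤ gterm f l S i + gterm f l {j} i := by
  have hD : ∀ k : ℕ, 0 ≤ f ((l.take (k+1)).toFinset) - f ((l.take k).toFinset) := by
    intro k
    have := hmono _ _ (take_toFinset_mono l (Nat.le_succ k))
    linarith
  unfold gterm
  by_cases h : i < l.length
  · rw [dif_pos h, dif_pos h, dif_pos h]
    by_cases hS : l.get ⟨i, h⟩ ∈ S
    · rw [if_pos (Finset.mem_insert_of_mem hS), if_pos hS]
      split_ifs with hjj
      · have := hD i; linarith
      · simp
    · by_cases hjx : l.get ⟨i, h⟩ = j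
      · rw [if_pos (by rw [hjx]; exact Finset.mem_insert_self j S), if_neg hS,
          if_pos (Finset.mem_singleton.mpr hjx)]
        simp
      · rw [if_neg (by simp only [Finset.mem_insert]; exact fun hc => hc.elim hjx hS), if_neg hS,
          if_neg (fun hc => hjx (Finset.mem_singleton.mp hc))]
        simp
  · rw [dif_neg h, dif_neg h, dif_neg h]; simp

lemma gfun_le_f {α : Type*} [DecidableEq α] {f : Finset α → ℝ} (hsub : SubmodularFn f)
    (hmono : MonotoneFn f) (hf0 : ∀ S : Finset α, 0 ≤ f S) (l : List α)
    (hnm : ∀ (i : ℕ) (h : i < l.length), l.get ⟨i, h⟩ ∉ (l.take i).toFinset)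
    (S : Finset α) : gfun f l S ≤ f S := by
  have h1 : gfun f l S ≤ ∑ i ∈ Finset.range l.length,
      (f ((l.take (i+1)).toFinset ∩ S) - f ((l.take i).toFinset ∩ S)) := by
    refine Finset.sum_le_sum fun i hi => ?_
    exact gterm_le_tele hsub l S i (Finset.mem_range.mp hi) (hnm i (Finset.mem_range.mp hi))
  rw [Finset.sum_range_sub (fun i => f ((l.take i).toFinset ∩ S)) l.length] at h1
  have h2 : (l.take 0).toFinset ∩ S = ∅ := by simp
  have h3 : (l.take l.length).toFinset = l.toFinset := by rw [List.take_length]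
  rw [h2, h3] at h1
  have h4 : f (l.toFinset ∩ S) ≤ f S := hmono _ _ Finset.inter_subset_right
  have h5 := hf0 (∅ : Finset α)
  linarith

/-- On a `(p+1)`-stable instance of monotone submodular maximization over a
`p`-extendible independence system, every greedy run outputs the optimal solution `S*`. -/
theorem greedy_recovers_submodular_pExtendible
    {α : Type*} [Fintype α] [DecidableEq α] (p : ℕ) (hp : 0 < p)
    (I : Finset α → Prop) (hdc : DownClosed I) (hext : Extendible p I)
    (f : Finset α → ℝ) (hf0 : ∀ S : Finset α, 0 ≤ f S)
    (hmono : MonotoneFn f) (hsub : SubmodularFn f)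
    (Sstar : Finset α) (hstable : SubmodStable I f ((p : ℝ) + 1) Sstar)
    (l : List α) (hl : GreedyRunSub I f l) :
    l.toFinset = Sstar := by
  classical
  obtain ⟨hgr, hmax⟩ := hl
  have hnm : ∀ (i : ℕ) (h : i < l.length), l.get ⟨i, h⟩ ∉ (l.take i).toFinset :=
    fun i h => (hgr ⟨i, h⟩).1
  have hD0 : ∀ i : ℕ, 0 ≤ f ((l.take (i+1)).toFinset) - f ((l.take i).toFinset) := by
    intro i
    have := hmono _ _ (take_toFinset_mono l (Nat.le_succ i))
    linarith
  have hIfull : I l.toFinset := by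
    rcases Nat.eq_zero_or_pos l.length with h0 | h0
    · have hl0 : l = [] := List.length_eq_zero_iff.mp h0
      subst hl0; simpa using hdc.1
    · have h1 : l.length - 1 < l.length := by omega
      have h2 := (hgr ⟨l.length - 1, h1⟩).2.1
      rw [← take_succ_toFinset l _ h1] at h2
      have h3 : l.length - 1 + 1 = l.length := by omega
      rw [h3, List.take_length] at h2
      exact h2
  have hItake : ∀ m : ℕ, I (l.take m).toFinset :=
    fun m => hdc.2 _ _ hIfull (take_toFinset_subset l m)
  have hgle : ∀ (S : Finset α) (i : ℕ), i < l.length →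
      gterm f l S i ≤ f ((l.take (i+1)).toFinset) - f ((l.take i).toFinset) := by
    intro S i h
    unfold gterm
    rw [dif_pos h]
    split_ifs
    · exact le_rfl
    · exact hD0 i
  have hgfull : ∀ (i : ℕ) (h : i < l.length),
      gterm f l l.toFinset i = f ((l.take (i+1)).toFinset) - f ((l.take i).toFinset) := by
    intro i h
    unfold gterm
    rw [dif_pos h, if_pos (List.mem_toFinset.mpr (List.get_mem l ⟨i, h⟩))]
  have hp0 : (0:ℝ) ≤ (p : ℝ) := Nat.cast_nonneg p
  have hgf0 : ∀ S : Finset α, 0 ≤ gfun f l S :=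
    fun S => Finset.sum_nonneg fun i _ => gterm_nonneg hmono l S i
  have hgfle : ∀ S : Finset α, gfun f l S ≤ f S := gfun_le_f hsub hmono hf0 l hnm
  have hgfmono : ∀ A B : Finset α, A ⊆ B → gfun f l A ≤ gfun f l B :=
    fun A B hAB => Finset.sum_le_sum fun i _ => gterm_mono hmono l hAB i
  -- the perturbation
  have hpert : IsPerturbation ((p:ℝ)+1) f (fun S => f S + (p:ℝ) * gfun f l S) := by
    refine ⟨?_, ?_, ?_, ?_, ?_⟩
    · intro S
      exact add_nonneg (hf0 S) (mul_nonneg hp0 (hgf0 S))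
    · intro A B hAB
      have h1 := hmono A B hAB
      have h2 := mul_le_mul_of_nonneg_left (hgfmono A B hAB) hp0
      simp only
      linarith
    · intro A B
      have hmod : gfun f l (A ∪ B) + gfun f l (A ∩ B) = gfun f l A + gfun f l B := by
        unfold gfun
        rw [← Finset.sum_add_distrib, ← Finset.sum_add_distrib]
        exact Finset.sum_congr rfl fun i _ => gterm_mod f l A B i
      have hmod' : (p:ℝ) * gfun f l (A ∪ B) + (p:ℝ) * gfun f l (A ∩ B)
          = (p:ℝ) * gfun f l A + (p:ℝ) * gfun f l B := by
        rw [← mul_add, hmod, mul_add]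
      have := hsub A B
      simp only
      linarith
    · intro S
      constructor
      · have := mul_nonneg hp0 (hgf0 S)
        simp only
        linarith
      · have h1 := mul_le_mul_of_nonneg_left (hgfle S) hp0
        simp only
        ring_nf
        nlinarith [hf0 S]
    · intro S j hj
      constructor
      · have h1 := mul_le_mul_of_nonneg_left (hgfmono S (insert j S) (Finset.subset_insert j S)) hp0
        simp only
        linarith
      · have h1 : gfun f l (insert j S) ≤ gfun f l S + gfun f l {j} := by
          unfold gfun
          rw [← Finset.sum_add_distrib]
          exact Finset.sum_le_sum fun i _ => gterm_insert hmono l hj i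
        have h2 : gfun f l {j} ≤ f {j} := hgfle {j}
        have h3 : (p:ℝ) * gfun f l (insert j S) ≤ (p:ℝ) * gfun f l S + (p:ℝ) * f {j} := by
          have := mul_le_mul_of_nonneg_left (by linarith : gfun f l (insert j S) ≤ gfun f l S + f {j}) hp0
          rw [mul_add] at this
          exact this
        have h4 : ((p:ℝ) + 1 - 1) = (p:ℝ) := by ring
        simp only
        rw [h4]
        linarith
  -- the exchange argument
  have exchange : ∀ m : ℕ, m ≤ l.length → ∃ T : Finset α, I T ∧
      (l.take m).toFinset ∪ Sstar ∩ l.toFinset ⊆ T ∧ T ⊆ (l.take m).toFinset ∪ Sstar ∧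
      f (Sstar ∪ l.toFinset) ≤ f (T ∪ l.toFinset) + (p:ℝ) *
        ∑ i ∈ Finset.range m,
          ((f ((l.take (i+1)).toFinset) - f ((l.take i).toFinset)) - gterm f l Sstar i) := by
    intro m
    induction m with
    | zero =>
      intro _
      refine ⟨Sstar, hstable.1, ?_, ?_, ?_⟩
      · have h0 : (l.take 0).toFinset = (∅ : Finset α) := by simp
        rw [h0, Finset.empty_union]
        exact Finset.inter_subset_left
      · have h0 : (l.take 0).toFinset = (∅ : Finset α) := by simp
        rw [h0, Finset.empty_union]
      · simp
    | succ m ih =>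
      intro hm1
      have hmn : m < l.length := hm1
      obtain ⟨T, hTI, hT1, hT2, hT3⟩ := ih (le_of_lt hmn)
      have hxl : l.get ⟨m, hmn⟩ ∈ l.toFinset := List.mem_toFinset.mpr (List.get_mem l ⟨m, hmn⟩)
      have hstepm : (l.take (m+1)).toFinset = insert (l.get ⟨m, hmn⟩) (l.take m).toFinset :=
        take_succ_toFinset l m hmn
      have hcharge0 : 0 ≤ (f ((l.take (m+1)).toFinset) - f ((l.take m).toFinset))
          - gterm f l Sstar m := by
        have := hgle Sstar m hmn
        linarith
      by_cases hxT : l.get ⟨m, hmn⟩ ∈ T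
      · refine ⟨T, hTI, ?_, ?_, ?_⟩
        · rw [hstepm, Finset.insert_union]
          exact Finset.insert_subset hxT hT1
        · refine hT2.trans (Finset.union_subset_union_left ?_)
          rw [hstepm]
          exact Finset.subset_insert _ _
        · rw [Finset.sum_range_succ, mul_add]
          have := mul_nonneg hp0 hcharge0
          linarith
      · have hxS : l.get ⟨m, hmn⟩ ∉ Sstar := fun hxS =>
          hxT (hT1 (Finset.mem_union_right _ (Finset.mem_inter.mpr ⟨hxS, hxl⟩)))
        have hgSm : gterm f l Sstar m = 0 := by
          unfold gterm
          rw [dif_pos hmn, if_neg hxS]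
        have hA1 : (l.take m).toFinset ∪ Sstar ∩ l.toFinset ⊆ l.toFinset :=
          Finset.union_subset (take_toFinset_subset l m) Finset.inter_subset_right
        have hIA : I ((l.take m).toFinset ∪ Sstar ∩ l.toFinset) := hdc.2 _ _ hTI hT1
        have hIxA : I (insert (l.get ⟨m, hmn⟩) ((l.take m).toFinset ∪ Sstar ∩ l.toFinset)) :=
          hdc.2 _ _ hIfull (Finset.insert_subset hxl hA1)
        obtain ⟨Z, hZsub, hZcard, hZI⟩ :=
          hext ((l.take m).toFinset ∪ Sstar ∩ l.toFinset) T (l.get ⟨m, hmn⟩) hT1 hIA hTI hIxA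
        have hdisj : Disjoint ((l.take m).toFinset ∪ Sstar ∩ l.toFinset) Z :=
          (Finset.disjoint_of_subset_left hZsub Finset.sdiff_disjoint).symm
        have hAZ : (l.take m).toFinset ∪ Sstar ∩ l.toFinset ⊆ T \ Z :=
          Finset.subset_sdiff.mpr ⟨hT1, hdisj⟩
        refine ⟨insert (l.get ⟨m, hmn⟩) (T \ Z), hZI, ?_, ?_, ?_⟩
        · rw [hstepm, Finset.insert_union]
          exact Finset.insert_subset_insert _ hAZ
        · rw [hstepm, Finset.insert_union]
          refine Finset.insert_subset_insert _ ?_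
          exact (Finset.sdiff_subset).trans hT2
        · -- the key inequality
          have hTsub : T ∪ l.toFinset ⊆ (insert (l.get ⟨m, hmn⟩) (T \ Z) ∪ l.toFinset) ∪ Z := by
            intro y hy
            rcases Finset.mem_union.mp hy with hyT | hyl
            · by_cases hyZ : y ∈ Z
              · exact Finset.mem_union_right _ hyZ
              · exact Finset.mem_union_left _ (Finset.mem_union_left _
                  (Finset.mem_insert_of_mem (Finset.mem_sdiff.mpr ⟨hyT, hyZ⟩)))
            · exact Finset.mem_union_left _ (Finset.mem_union_right _ hyl)
          have h1 : f (T ∪ l.toFinset) ≤ f ((insert (l.get ⟨m, hmn⟩) (T \ Z) ∪ l.toFinset) ∪ Z) :=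
            hmono _ _ hTsub
          have h2 := submod_union_le hsub hmono (insert (l.get ⟨m, hmn⟩) (T \ Z) ∪ l.toFinset) Z
          have h3 : ∀ z ∈ Z, f (insert z (insert (l.get ⟨m, hmn⟩) (T \ Z) ∪ l.toFinset))
              - f (insert (l.get ⟨m, hmn⟩) (T \ Z) ∪ l.toFinset)
              ≤ f ((l.take (m+1)).toFinset) - f ((l.take m).toFinset) := by
            intro z hz
            have hzTA := hZsub hz
            rw [Finset.mem_sdiff] at hzTA
            obtain ⟨hzT, hzA⟩ := hzTA
            have hztake : z ∉ (l.take m).toFinset := fun hc => hzA (Finset.mem_union_left _ hc)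
            have hzS : z ∈ Sstar := by
              rcases Finset.mem_union.mp (hT2 hzT) with hc | hc
              · exact absurd hc hztake
              · exact hc
            have hzl : z ∉ l.toFinset := fun hc =>
              hzA (Finset.mem_union_right _ (Finset.mem_inter.mpr ⟨hzS, hc⟩))
            have hznotin : z ∉ insert (l.get ⟨m, hmn⟩) (T \ Z) ∪ l.toFinset := by
              intro hc
              rcases Finset.mem_union.mp hc with hc1 | hc1
              · rcases Finset.mem_insert.mp hc1 with hc2 | hc2
                · exact hzl (hc2 ▸ hxl)
                · exact (Finset.mem_sdiff.mp hc2).2 hz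
              · exact hzl hc1
            have hsub1 : (l.take m).toFinset ⊆ insert (l.get ⟨m, hmn⟩) (T \ Z) ∪ l.toFinset :=
              (take_toFinset_subset l m).trans Finset.subset_union_right
            have step1 := submod_marg_mono hsub hsub1 hznotin
            have hfeas : I (insert z (l.take m).toFinset) :=
              hdc.2 T _ hTI (Finset.insert_subset hzT
                ((Finset.subset_union_left).trans hT1))
            have step2 := (hgr ⟨m, hmn⟩).2.2 z hztake hfeas
            rw [← hstepm] at step2
            calc f (insert z (insert (l.get ⟨m, hmn⟩) (T \ Z) ∪ l.toFinset))
                - f (insert (l.get ⟨m, hmn⟩) (T \ Z) ∪ l.toFinset)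
                ≤ f (insert z (l.take m).toFinset) - f ((l.take m).toFinset) := step1
              _ ≤ f ((l.take (m+1)).toFinset) - f ((l.take m).toFinset) := step2
          have h4 : ∑ z ∈ Z, (f (insert z (insert (l.get ⟨m, hmn⟩) (T \ Z) ∪ l.toFinset))
              - f (insert (l.get ⟨m, hmn⟩) (T \ Z) ∪ l.toFinset))
              ≤ (p:ℝ) * (f ((l.take (m+1)).toFinset) - f ((l.take m).toFinset)) := by
            calc ∑ z ∈ Z, (f (insert z (insert (l.get ⟨m, hmn⟩) (T \ Z) ∪ l.toFinset))
                - f (insert (l.get ⟨m, hmn⟩) (T \ Z) ∪ l.toFinset))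
                ≤ ∑ _z ∈ Z, (f ((l.take (m+1)).toFinset) - f ((l.take m).toFinset)) :=
                  Finset.sum_le_sum h3
              _ = (Z.card : ℝ) * (f ((l.take (m+1)).toFinset) - f ((l.take m).toFinset)) := by
                  rw [Finset.sum_const, nsmul_eq_mul]
              _ ≤ (p:ℝ) * (f ((l.take (m+1)).toFinset) - f ((l.take m).toFinset)) :=
                  mul_le_mul_of_nonneg_right (by exact_mod_cast hZcard) (hD0 m)
          rw [Finset.sum_range_succ, hgSm, mul_add]
          linarith
  -- final assembly
  obtain ⟨T, hTI, hT1, hT2, hT3⟩ := exchange l.length le_rfl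
  rw [List.take_length] at hT1 hT2
  have hlT : l.toFinset ⊆ T := (Finset.subset_union_left).trans hT1
  have hTl : T ⊆ l.toFinset := by
    intro z hzT
    by_contra hz
    exact hmax z hz (hdc.2 T _ hTI (Finset.insert_subset hzT hlT))
  have hTeq : T ∪ l.toFinset = l.toFinset := Finset.union_eq_right.mpr hTl
  rw [hTeq] at hT3
  have hsum : ∑ i ∈ Finset.range l.length,
      ((f ((l.take (i+1)).toFinset) - f ((l.take i).toFinset)) - gterm f l Sstar i)
      = gfun f l l.toFinset - gfun f l Sstar := by
    unfold gfun
    rw [← Finset.sum_sub_distrib]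
    refine Finset.sum_congr rfl fun i hi => ?_
    rw [hgfull i (Finset.mem_range.mp hi)]
  rw [hsum] at hT3
  by_contra hne
  have hlt := hstable.2 _ hpert l.toFinset hIfull hne
  have hS1 : f Sstar ≤ f (Sstar ∪ l.toFinset) := hmono _ _ Finset.subset_union_left
  have hfin : (p:ℝ) * (gfun f l l.toFinset - gfun f l Sstar)
      = (p:ℝ) * gfun f l l.toFinset - (p:ℝ) * gfun f l Sstar := by ring
  rw [hfin] at hT3
  linarith
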